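/- In the network identity-expression game with λ > 1, if player i has exactly one neighbor j (i.e., η(i) = {j}), then in any pure strategy Nash equilibrium X* the strategies satisfy ‖x*_i − x*_j‖² = 1. -/
import Mathlib


open Finset

/-- Squared Euclidean norm of a real vector. -/
noncomputable def sqnorm {d : ℕ} (v : Fin d → ℝ) : ℝ := ∑ k, (v k) ^ 2

/-- Squared Euclidean distance between two integer vectors. -/
def sqdist {d : ℕ} (x y : Fin d → ℤ) : ℤ := ∑ k, (x k - y k) ^ 2

/-- Mean strategy of player `i`'s neighbors, computed coordinatewise in ℝ. -/
noncomputable def nbrMean {N d : ℕ} (η : Fin N → Finset (Fin N))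
    (X : Fin N → Fin d → ℤ) (i : Fin N) : Fin d → ℝ :=
  fun k => (∑ j ∈ η i, (X j k : ℝ)) / (η i).card

/-- Number of `i`'s neighbors adopting the same strategy as `i`. -/
def nTilde {N d : ℕ} (η : Fin N → Finset (Fin N))
    (X : Fin N → Fin d → ℤ) (i : Fin N) : ℕ :=
  ((η i).filter (fun j => X j = X i)).card

/-- Network utility: `u_i(X) = -‖x_i - x̄_{η(i)}‖² - λ ñ_i(X)`. -/
noncomputable def netUtility {N d : ℕ} (lam : ℝ) (η : Fin N → Finset (Fin N))
    (X : Fin N → Fin d → ℤ) (i : Fin N) : ℝ :=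
  - sqnorm (fun k => (X i k : ℝ) - nbrMean η X i k) - lam * nTilde η X i

/-- With `λ > 1`, if player `i` has exactly one neighbor `j`, then in any pure strategy
Nash equilibrium `X*` we have `‖x*_i - x*_j‖² = 1`. -/
theorem nash_single_neighbor_unit_dist {N d : ℕ} (hd : 1 ≤ d)
    (η : Fin N → Finset (Fin N))
    (hηne : ∀ i, (η i).Nonempty) (hηirr : ∀ i, i ∉ η i)
    (lam : ℝ) (hlam : 1 < lam)
    (i j : Fin N) (hij : η i = {j})
    (X : Fin N → Fin d → ℤ)
    (hnash : ∀ (i' : Fin N) (x' : Fin d → ℤ),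
      netUtility lam η (Function.update X i' x') i' ≤ netUtility lam η X i') :
    sqdist (X i) (X j) = 1 := by

  have hji : j ≠ i := by
    intro h; exact hηirr i (by rw [hij, h]; exact Finset.mem_singleton_self i)
  set k0 : Fin d := ⟨0, hd⟩
  have key : ∀ Y : Fin N → Fin d → ℤ, netUtility lam η Y i =
      -((sqdist (Y i) (Y j) : ℤ) : ℝ) - lam * (if Y j = Y i then 1 else 0) := by
    intro Y
    unfold netUtility sqnorm nbrMean nTilde sqdist
    rw [hij]
    simp only [Finset.sum_singleton, Finset.card_singleton, Nat.cast_one, div_one,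
      Finset.filter_singleton]
    have hcast : ((∑ k, (Y i k - Y j k) ^ 2 : ℤ) : ℝ) = ∑ k, ((Y i k : ℝ) - Y j k) ^ 2 := by
      push_cast; rfl
    rw [hcast]
    split_ifs <;> simp
  -- the deviation strategy
  set x' : Fin d → ℤ := fun k => X j k + if k = k0 then 1 else 0 with hx'
  set Y := Function.update X i x' with hY
  have hYi : Y i = x' := Function.update_self i x' X
  have hYj : Y j = X j := Function.update_of_ne hji x' X
  have hne : X j ≠ x' := by
    intro h
    have := congrFun h k0
    simp [hx'] at this
  have hdist1 : sqdist x' (X j) = 1 := by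
    unfold sqdist
    have : ∀ k, (x' k - X j k) ^ 2 = if k = k0 then 1 else 0 := by
      intro k; by_cases h : k = k0 <;> simp [hx', h]
    simp only [this, Finset.sum_ite_eq' Finset.univ k0, Finset.mem_univ, if_true]
  have hdev := hnash i x'
  rw [key X, key Y, hYi, hYj, hdist1, if_neg hne] at hdev
  have hdev' : (-1 : ℝ) ≤ -((sqdist (X i) (X j) : ℤ) : ℝ)
      - lam * (if X j = X i then 1 else 0) := by
    simpa using hdev
  have hXne : X j ≠ X i := by
    intro h
    rw [if_pos h, h] at hdev'
    have : sqdist (X i) (X i) = 0 := by unfold sqdist; simp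
    rw [this] at hdev'
    push_cast at hdev'
    linarith
  rw [if_neg hXne] at hdev'
  have hle : sqdist (X i) (X j) ≤ 1 := by
    have : ((sqdist (X i) (X j) : ℤ) : ℝ) ≤ 1 := by linarith
    exact_mod_cast this
  have hnonneg : 0 ≤ sqdist (X i) (X j) := by
    unfold sqdist; exact Finset.sum_nonneg fun k _ => sq_nonneg _
  have hne0 : sqdist (X i) (X j) ≠ 0 := by
    intro h0
    apply hXne
    have := (Finset.sum_eq_zero_iff_of_nonneg
      (fun k _ => sq_nonneg (X i k - X j k))).mp h0
    funext k
    have hk := this k (Finset.mem_univ k)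
    have := pow_eq_zero_iff (n := 2) (by norm_num) |>.mp hk
    linarith [sub_eq_zero.mp this]
  omega
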